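/- The generating function of c(n,i), the number of occurrences of part i over all compositions of n, is sum_{n>=0} c(n,i) x^n = x^i * (1 - 2x + x^2) / (1 - 2x)^2 (as a formal power series). -/

import Mathlib

open PowerSeries

def pcF (m : ℕ) : ℕ := 2 ^ (m - 1)

def pcConv (M : ℕ) : ℕ := ∑ a ∈ Finset.range (M + 1), pcF a * pcF (M - a)

lemma pcF_sum (M : ℕ) (hM : 1 ≤ M) : ∑ b ∈ Finset.range M, pcF b = pcF M := by
  induction M with
  | zero => omega
  | succ M ih =>
    rcases Nat.eq_or_lt_of_le hM with h | h
    · simp [← h, pcF]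
    · have h1 : 1 ≤ M := by omega
      rw [Finset.sum_range_succ, ih h1]
      unfold pcF
      have : M - 1 + 1 = M := by omega
      rw [show M + 1 - 1 = (M - 1) + 1 by omega, pow_succ, ← this]
      ring

lemma pcT (M : ℕ) : ∑ t ∈ Finset.range M, pcConv t = ∑ a ∈ Finset.range M, pcF a * pcF (M - a) := by
  induction M with
  | zero => simp
  | succ M ih =>
    rw [Finset.sum_range_succ, ih, Finset.sum_range_succ]
    have key : ∀ a ∈ Finset.range M, pcF a * pcF (M + 1 - a) = pcF a * pcF (M - a) + pcF a * pcF (M - a) := by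
      intro a ha
      rw [Finset.mem_range] at ha
      have : pcF (M + 1 - a) = 2 * pcF (M - a) := by
        unfold pcF
        rw [show M + 1 - a - 1 = (M - a - 1) + 1 by omega, pow_succ]
        ring
      rw [this]; ring
    rw [Finset.sum_congr rfl key, Finset.sum_add_distrib]
    have hc : pcConv M = (∑ a ∈ Finset.range M, pcF a * pcF (M - a)) + pcF M := by
      unfold pcConv; rw [Finset.sum_range_succ]; simp [pcF]
    have hm1 : pcF M * pcF (M + 1 - M) = pcF M := by
      rw [show M + 1 - M = 1 by omega]; simp [pcF]
    rw [hc, hm1]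
    ring

lemma pcS (M : ℕ) : (∑ t ∈ Finset.range M, pcConv t) + pcF M = pcConv M := by
  rw [pcT]
  unfold pcConv
  rw [Finset.sum_range_succ]
  simp [pcF]

lemma pc_ne (n : ℕ) (K : Composition (n+1)) : K.blocks ≠ [] := fun h => by
  have := K.blocks_sum; rw [h] at this; simp at this

lemma pc_cons (n : ℕ) (K : Composition (n+1)) : K.blocks.headI :: K.blocks.tail = K.blocks := by
  cases h : K.blocks with
  | nil => exact absurd h (pc_ne n K)
  | cons a t => rfl

lemma pc_head_pos (n : ℕ) (K : Composition (n+1)) : 0 < K.blocks.headI :=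
  K.blocks_pos (by rw [← pc_cons n K]; exact List.mem_cons_self)

lemma pc_sum_eq (n : ℕ) (K : Composition (n+1)) :
    K.blocks.headI + K.blocks.tail.sum = n + 1 := by
  have h := K.blocks_sum
  rw [← pc_cons n K] at h
  simpa using h

def pcPeel (n : ℕ) : Composition (n+1) ≃ (k : Fin (n+1)) × Composition (n - (k : ℕ)) where
  toFun K := ⟨⟨K.blocks.headI - 1, by
      have h := pc_sum_eq n K
      have := pc_head_pos n K
      omega⟩,
    ⟨K.blocks.tail,
     fun hj => K.blocks_pos (by rw [← pc_cons n K]; exact List.mem_cons_of_mem _ hj),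
     by have h := pc_sum_eq n K
        have := pc_head_pos n K
        simp only []
        omega⟩⟩
  invFun p := ⟨((p.1 : ℕ) + 1) :: p.2.blocks,
    fun {j} hj => by
      rcases List.mem_cons.mp hj with h | h
      · omega
      · exact p.2.blocks_pos h,
    by have := p.2.blocks_sum
       have := p.1.isLt
       simp only [List.sum_cons]
       omega⟩
  left_inv K := by
    ext1
    show (K.blocks.headI - 1 + 1) :: K.blocks.tail = K.blocks
    have := pc_head_pos n K
    rw [show K.blocks.headI - 1 + 1 = K.blocks.headI by omega, pc_cons]
  right_inv p := rfl

def partCount (n i : ℕ) : ℕ := ∑ K : Composition n, K.blocks.count i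

lemma pc_shift (g : ℕ → ℕ) (i : ℕ) : ∀ N : ℕ,
    ∑ m ∈ Finset.range N, (if i ≤ m then g (m - i) else 0) = ∑ t ∈ Finset.range (N - i), g t := by
  intro N
  induction N with
  | zero => simp
  | succ N ih =>
    rw [Finset.sum_range_succ, ih]
    by_cases h : i ≤ N
    · rw [if_pos h, show N + 1 - i = (N - i) + 1 by omega, Finset.sum_range_succ]
    · rw [if_neg h, show N + 1 - i = 0 by omega, show N - i = 0 by omega, add_zero]

lemma pc_main (i : ℕ) (hi : 1 ≤ i) : ∀ n, partCount n i = if i ≤ n then pcConv (n - i) else 0 := by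
  intro n
  induction n using Nat.strong_induction_on with
  | _ n ih =>
  match n with
  | 0 =>
    rw [if_neg (by omega)]
    unfold partCount
    apply Finset.sum_eq_zero
    intro K _
    cases hb : K.blocks with
    | nil => simp [hb]
    | cons a t =>
      exfalso
      have hs := K.blocks_sum
      rw [hb] at hs
      have : 0 < a := K.blocks_pos (by rw [hb]; exact List.mem_cons_self)
      simp at hs
      omega
  | (m + 1) =>
    have step1 : partCount (m+1) i =
        ∑ p : (k : Fin (m+1)) × Composition (m - (k : ℕ)),
          ((((p.1 : ℕ) + 1) :: p.2.blocks).count i) := by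
      unfold partCount
      exact Fintype.sum_equiv (pcPeel m).symm
        (fun p => List.count i (((p.1 : ℕ) + 1) :: p.2.blocks))
        (fun K => List.count i K.blocks) (fun p => rfl) |>.symm
    rw [step1, ← Finset.univ_sigma_univ, Finset.sum_sigma]
    have step2 : ∀ k : Fin (m+1),
        ∑ K : Composition (m - (k : ℕ)), ((((k : ℕ) + 1) :: K.blocks).count i)
          = partCount (m - (k : ℕ)) i + (if (k : ℕ) + 1 = i then pcF (m - (k : ℕ)) else 0) := by
      intro k
      have : ∀ K : Composition (m - (k : ℕ)), ((((k : ℕ) + 1) :: K.blocks).count i)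
          = K.blocks.count i + (if (k : ℕ) + 1 = i then 1 else 0) := by
        intro K
        rw [List.count_cons]
        congr 1
        simp [beq_iff_eq]
      rw [Finset.sum_congr rfl fun K _ => this K, Finset.sum_add_distrib]
      congr 1
      rw [Finset.sum_const, Finset.card_univ, composition_card]
      by_cases h : (k : ℕ) + 1 = i <;> simp [h, pcF, mul_comm]
    rw [Finset.sum_congr rfl fun k _ => step2 k, Finset.sum_add_distrib]
    rw [Fin.sum_univ_eq_sum_range (fun k => partCount (m - k) i),
        Fin.sum_univ_eq_sum_range (fun k => if k + 1 = i then pcF (m - k) else 0)]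
    have step3 : ∑ k ∈ Finset.range (m+1), partCount (m - k) i
        = ∑ t ∈ Finset.range (m + 1 - i), pcConv t := by
      have hrefl : ∑ k ∈ Finset.range (m+1), partCount (m - k) i
          = ∑ j ∈ Finset.range (m+1), partCount j i := by
        have h := Finset.sum_range_reflect (fun j => partCount j i) (m+1)
        simpa using h
      rw [hrefl,
        Finset.sum_congr rfl fun j hj => ih j (by rw [Finset.mem_range] at hj; omega),
        pc_shift pcConv i (m+1)]
    have step4 : ∑ k ∈ Finset.range (m+1), (if k + 1 = i then pcF (m - k) else 0)
        = if i ≤ m + 1 then pcF (m + 1 - i) else 0 := by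
      rw [Finset.sum_congr rfl (fun k _ => by
        rw [show (if k + 1 = i then pcF (m - k) else 0)
              = (if k = i - 1 then pcF (m - k) else 0) by
            by_cases h : k + 1 = i
            · rw [if_pos h, if_pos (by omega)]
            · rw [if_neg h, if_neg (by omega)]])]
      rw [Finset.sum_ite_eq' (Finset.range (m+1)) (i-1) (fun k => pcF (m - k))]
      by_cases h : i ≤ m + 1
      · rw [if_pos (by rw [Finset.mem_range]; omega), if_pos h,
          show m - (i - 1) = m + 1 - i by omega]
      · rw [if_neg (by rw [Finset.mem_range]; omega), if_neg h]
    rw [step3, step4]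
    by_cases h : i ≤ m + 1
    · rw [if_pos h, if_pos h, pcS (m + 1 - i)]
    · rw [if_neg h, if_neg h, show m + 1 - i = 0 by omega]
      simp

lemma pcF_gen : (PowerSeries.mk fun m => (pcF m : ℚ)) * (1 - 2 * X) = 1 - X := by
  have hexp : (PowerSeries.mk fun m => (pcF m : ℚ)) * (1 - 2 * X)
      = (PowerSeries.mk fun m => (pcF m : ℚ))
        - ((PowerSeries.mk fun m => (pcF m : ℚ)) * X)
        - ((PowerSeries.mk fun m => (pcF m : ℚ)) * X) := by ring
  rw [hexp]
  ext n
  cases n with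
  | zero => simp [pcF]
  | succ n =>
    rw [map_sub, map_sub, coeff_mk, PowerSeries.coeff_succ_mul_X, coeff_mk]
    cases n with
    | zero => simp [pcF]
    | succ n =>
      rw [map_sub, PowerSeries.coeff_one, PowerSeries.coeff_X,
        if_neg (by omega), if_neg (by omega)]
      simp only [pcF]
      push_cast
      rw [pow_succ]
      ring

theorem partCount_generating_function (i : ℕ) (hi : 1 ≤ i) :
    PowerSeries.mk (fun n => (partCount n i : ℚ)) =
      (X : PowerSeries ℚ) ^ i * (1 - 2 * X + X ^ 2) * ((1 - 2 * X) ^ 2)⁻¹ := by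
  set F : PowerSeries ℚ := PowerSeries.mk fun m => (pcF m : ℚ) with hF
  have hC : PowerSeries.mk (fun n => (partCount n i : ℚ)) = X ^ i * (F * F) := by
    ext n
    rw [coeff_mk, PowerSeries.coeff_X_pow_mul']
    rw [pc_main i hi n]
    split_ifs with h
    · rw [PowerSeries.coeff_mul, Finset.Nat.sum_antidiagonal_eq_sum_range_succ_mk]
      simp only [hF, coeff_mk, pcConv]
      push_cast
      rfl
    · simp
  have hunit : constantCoeff ((1 - 2 * X) ^ 2 : PowerSeries ℚ) ≠ 0 := by
    simp
  have hne : ((1 - 2 * X) ^ 2 : PowerSeries ℚ) ≠ 0 := fun h => by simp [h] at hunit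
  apply mul_right_cancel₀ hne
  rw [hC]
  have hinv : ((1 - 2 * X) ^ 2 : PowerSeries ℚ)⁻¹ * (1 - 2 * X) ^ 2 = 1 :=
    PowerSeries.inv_mul_cancel _ hunit
  calc X ^ i * (F * F) * (1 - 2 * X) ^ 2
      = X ^ i * ((F * (1 - 2 * X)) * (F * (1 - 2 * X))) := by ring
    _ = X ^ i * ((1 - X) * (1 - X)) := by rw [pcF_gen]
    _ = X ^ i * (1 - 2 * X + X ^ 2) * (((1 - 2 * X) ^ 2)⁻¹ * (1 - 2 * X) ^ 2) := by
        rw [hinv]; ring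
    _ = X ^ i * (1 - 2 * X + X ^ 2) * ((1 - 2 * X) ^ 2)⁻¹ * (1 - 2 * X) ^ 2 := by ring
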